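/- In any clobber position reachable from an even-length alternating-color path by a sequence of legal moves, whenever two adjacent stones have the same color, at least one of the two is an endpoint of its connected component (maximal path segment of stones). -/

import Mathlib

universe u

namespace SetTheory

/-- Mathlib's former pre-game type (removed from Mathlib), with its old definition. -/
inductive PGame : Type (u + 1)
  | mk : ∀ α β : Type u, (α → PGame) → (β → PGame) → PGame

namespace PGame

instance : Zero PGame := ⟨⟨PEmpty, PEmpty, PEmpty.elim, PEmpty.elim⟩⟩

def ofLists (L R : List PGame.{u}) : PGame.{u} :=
  mk (ULift (Fin L.length)) (ULift (Fin R.length)) (fun i => L.get i.down) fun j => R.get j.down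

end PGame

end SetTheory

open SetTheory PGame

inductive Cell | x | o | e
deriving DecidableEq

abbrev Pos := List Cell

/-- All positions reachable by one move of the player with stones `me`
clobbering an adjacent stone of the opponent `opp`. -/
def movesAux (me opp : Cell) : Pos → List Pos
  | a :: b :: rest =>
      (if a = me ∧ b = opp then [Cell.e :: me :: rest] else []) ++
      (if a = opp ∧ b = me then [me :: Cell.e :: rest] else []) ++
      (movesAux me opp (b :: rest)).map (a :: ·)
  | _ => []

def leftMoves (p : Pos) : List Pos := movesAux Cell.x Cell.o p
def rightMoves (p : Pos) : List Pos := movesAux Cell.o Cell.x p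

def stones (p : Pos) : Nat := p.countP (· != Cell.e)

/-- Game value of a clobber position, via fuel recursion (each move removes one stone). -/
def valueFuel : Nat → Pos → PGame
  | 0, _ => 0
  | n+1, p => PGame.ofLists ((leftMoves p).map (valueFuel n)) ((rightMoves p).map (valueFuel n))

def value (p : Pos) : PGame := valueFuel (stones p) p

/-- One legal clobber move (by either player). -/
def Step (p q : Pos) : Prop := q ∈ leftMoves p ∨ q ∈ rightMoves p

/-- Positions reachable by a sequence of legal moves. -/
def Reachable (p q : Pos) : Prop := Relation.ReflTransGen Step p q

/-- The alternating position `(ox)^n`. -/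
def altOX : Nat → Pos
  | 0 => []
  | n+1 => Cell.o :: Cell.x :: altOX n


/-- A "bad window": four consecutive stones `a c c d` (all nonempty, equal middle). -/
def Bad (p : Pos) (i : Nat) : Prop :=
  ∃ a c d, p[i]? = some a ∧ a ≠ Cell.e ∧ p[i+1]? = some c ∧ c ≠ Cell.e ∧
    p[i+2]? = some c ∧ p[i+3]? = some d ∧ d ≠ Cell.e

def GoodPos (p : Pos) : Prop := ∀ i, ¬ Bad p i

lemma movesAux_spec (me opp : Cell) : ∀ p q : Pos, q ∈ movesAux me opp p →
    ∃ l r : Pos, (p = l ++ me :: opp :: r ∧ q = l ++ Cell.e :: me :: r) ∨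
      (p = l ++ opp :: me :: r ∧ q = l ++ me :: Cell.e :: r)
  | a :: b :: rest, q, hq => by
    unfold movesAux at hq
    rw [List.mem_append, List.mem_append] at hq
    rcases hq with (hq | hq) | hq
    · by_cases h : a = me ∧ b = opp
      · rw [if_pos h, List.mem_singleton] at hq
        exact ⟨[], rest, Or.inl ⟨by simp [h.1, h.2], by simp [hq]⟩⟩
      · simp [h] at hq
    · by_cases h : a = opp ∧ b = me
      · rw [if_pos h, List.mem_singleton] at hq
        exact ⟨[], rest, Or.inr ⟨by simp [h.1, h.2], by simp [hq]⟩⟩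
      · simp [h] at hq
    · rw [List.mem_map] at hq
      obtain ⟨q', hq', rfl⟩ := hq
      obtain ⟨l, r, h⟩ := movesAux_spec me opp (b :: rest) q' hq'
      refine ⟨a :: l, r, ?_⟩
      rcases h with ⟨h1, h2⟩ | ⟨h1, h2⟩
      · exact Or.inl ⟨by simp [h1], by simp [h2]⟩
      · exact Or.inr ⟨by simp [h1], by simp [h2]⟩

lemma get?_mid_fst (l r : Pos) (u v : Cell) :
    (l ++ u :: v :: r)[l.length]? = some u := by
  rw [List.getElem?_append_right (Nat.le_refl _)]
  simp

lemma get?_mid_snd (l r : Pos) (u v : Cell) :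
    (l ++ u :: v :: r)[l.length + 1]? = some v := by
  rw [List.getElem?_append_right (Nat.le_succ _)]
  simp

lemma get?_same (l r : Pos) (u v s t : Cell) (k : Nat)
    (h1 : k ≠ l.length) (h2 : k ≠ l.length + 1) :
    (l ++ u :: v :: r)[k]? = (l ++ s :: t :: r)[k]? := by
  rcases Nat.lt_or_ge k l.length with h | h
  · rw [List.getElem?_append_left h, List.getElem?_append_left h]
  · rw [List.getElem?_append_right h, List.getElem?_append_right h]
    have h3 : k - l.length = (k - l.length - 2) + 2 := by omega
    rw [h3]
    simp

lemma bad_back_left (me opp : Cell) (hopp : opp ≠ Cell.e) (l r : Pos) (i : Nat)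
    (hb : Bad (l ++ Cell.e :: me :: r) i) : Bad (l ++ me :: opp :: r) i := by
  obtain ⟨a, c, d, ha, hae, hc1, hce, hc2, hd, hde⟩ := hb
  set j := l.length with hj
  have hje : (l ++ Cell.e :: me :: r)[j]? = some Cell.e := get?_mid_fst l r _ _
  have n0 : i ≠ j := fun h => hae (by rw [h] at ha; exact Option.some.inj (ha.symm.trans hje))
  have n1 : i + 1 ≠ j := fun h => hce (by rw [h] at hc1; exact Option.some.inj (hc1.symm.trans hje))
  have n2 : i + 2 ≠ j := fun h => hce (by rw [h] at hc2; exact Option.some.inj (hc2.symm.trans hje))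
  have n3 : i + 3 ≠ j := fun h => hde (by rw [h] at hd; exact Option.some.inj (hd.symm.trans hje))
  by_cases hi : i = j + 1
  · subst hi
    refine ⟨opp, c, d, get?_mid_snd l r _ _, hopp, ?_, hce, ?_, ?_, hde⟩
    · rw [← get?_same l r Cell.e me me opp (j+1+1) (by omega) (by omega)]; exact hc1
    · rw [← get?_same l r Cell.e me me opp (j+1+2) (by omega) (by omega)]; exact hc2
    · rw [← get?_same l r Cell.e me me opp (j+1+3) (by omega) (by omega)]; exact hd
  · refine ⟨a, c, d, ?_, hae, ?_, hce, ?_, ?_, hde⟩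
    · rw [← get?_same l r Cell.e me me opp i (by omega) (by omega)]; exact ha
    · rw [← get?_same l r Cell.e me me opp (i+1) (by omega) (by omega)]; exact hc1
    · rw [← get?_same l r Cell.e me me opp (i+2) (by omega) (by omega)]; exact hc2
    · rw [← get?_same l r Cell.e me me opp (i+3) (by omega) (by omega)]; exact hd

lemma bad_back_right (me opp : Cell) (hopp : opp ≠ Cell.e) (l r : Pos) (i : Nat)
    (hb : Bad (l ++ me :: Cell.e :: r) i) : Bad (l ++ opp :: me :: r) i := by
  obtain ⟨a, c, d, ha, hae, hc1, hce, hc2, hd, hde⟩ := hb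
  set j := l.length with hj
  have hje : (l ++ me :: Cell.e :: r)[j + 1]? = some Cell.e := get?_mid_snd l r _ _
  have n0 : i ≠ j + 1 := fun h => hae (by rw [h] at ha; exact Option.some.inj (ha.symm.trans hje))
  have n1 : i + 1 ≠ j + 1 := fun h => hce (by rw [h] at hc1; exact Option.some.inj (hc1.symm.trans hje))
  have n2 : i + 2 ≠ j + 1 := fun h => hce (by rw [h] at hc2; exact Option.some.inj (hc2.symm.trans hje))
  have n3 : i + 3 ≠ j + 1 := fun h => hde (by rw [h] at hd; exact Option.some.inj (hd.symm.trans hje))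
  by_cases hi : i + 3 = j
  · refine ⟨a, c, opp, ?_, hae, ?_, hce, ?_, ?_, hopp⟩
    · rw [← get?_same l r me Cell.e opp me i (by omega) (by omega)]; exact ha
    · rw [← get?_same l r me Cell.e opp me (i+1) (by omega) (by omega)]; exact hc1
    · rw [← get?_same l r me Cell.e opp me (i+2) (by omega) (by omega)]; exact hc2
    · rw [hi]; exact get?_mid_fst l r _ _
  · have nj0 : i ≠ j := by
      intro h
      exact n1 (by omega)
    have nj1 : i + 1 ≠ j := fun h => n2 (by omega)
    have nj2 : i + 2 ≠ j := fun h => n3 (by omega)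
    refine ⟨a, c, d, ?_, hae, ?_, hce, ?_, ?_, hde⟩
    · rw [← get?_same l r me Cell.e opp me i (by omega) (by omega)]; exact ha
    · rw [← get?_same l r me Cell.e opp me (i+1) (by omega) (by omega)]; exact hc1
    · rw [← get?_same l r me Cell.e opp me (i+2) (by omega) (by omega)]; exact hc2
    · rw [← get?_same l r me Cell.e opp me (i+3) (by omega) (by omega)]; exact hd

lemma inv_moves (me opp : Cell) (hopp : opp ≠ Cell.e) (p q : Pos)
    (hp : GoodPos p) (hq : q ∈ movesAux me opp p) : GoodPos q := by
  obtain ⟨l, r, hlr⟩ := movesAux_spec me opp p q hq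
  intro i hb
  rcases hlr with ⟨h1, h2⟩ | ⟨h1, h2⟩
  · exact hp i (h1 ▸ bad_back_left me opp hopp l r i (h2 ▸ hb))
  · exact hp i (h1 ▸ bad_back_right me opp hopp l r i (h2 ▸ hb))

lemma inv_step (p q : Pos) (h : Step p q) (hp : GoodPos p) : GoodPos q := by
  rcases h with h | h
  · exact inv_moves Cell.x Cell.o (by simp) p q hp h
  · exact inv_moves Cell.o Cell.x (by simp) p q hp h

lemma altOX_no_adj : ∀ (n i : Nat) (c : Cell),
    (altOX n)[i]? = some c → (altOX n)[i+1]? = some c → False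
  | n+1, 0, c, h1, h2 => by
    simp only [altOX, List.getElem?_cons_zero, List.getElem?_cons_succ] at h1 h2
    rw [← Option.some.inj h1] at h2
    exact Cell.noConfusion (Option.some.inj h2)
  | 0+1, 1, c, h1, h2 => by
    simp [altOX] at h2
  | (m+1)+1, 1, c, h1, h2 => by
    simp only [altOX, List.getElem?_cons_zero, List.getElem?_cons_succ] at h1 h2
    rw [← Option.some.inj h1] at h2
    exact Cell.noConfusion (Option.some.inj h2)
  | n+1, i+2, c, h1, h2 => by
    simp only [altOX, List.getElem?_cons_zero, List.getElem?_cons_succ] at h1 h2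
    exact altOX_no_adj n i c h1 h2

lemma inv_altOX (n : Nat) : GoodPos (altOX n) := by
  intro i ⟨a, c, d, _, _, hc1, _, hc2, _, _⟩
  exact altOX_no_adj n (i+1) c hc1 hc2

lemma inv_reachable (n : Nat) (p : Pos) (h : Reachable (altOX n) p) : GoodPos p := by
  induction h with
  | refl => exact inv_altOX n
  | tail _ hstep ih => exact inv_step _ _ hstep ih

/-- In any position reachable from an even-length alternating path, whenever two
adjacent stones have the same color, at least one of them is an endpoint of its
connected part (its other neighbor is empty or off the board). -/
theorem adjacent_same_color_endpoint (n : Nat) (p : Pos)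
    (h : Reachable (altOX n) p) (i : Nat) (c : Cell) (hc : c ≠ Cell.e)
    (h1 : p[i]? = some c) (h2 : p[i+1]? = some c) :
    (i = 0 ∨ p[i-1]? = some Cell.e) ∨
      (p[i+2]? = none ∨ p[i+2]? = some Cell.e) := by
  by_contra hcon
  push_neg at hcon
  obtain ⟨⟨hi0, hprev⟩, hnext1, hnext2⟩ := hcon
  have hinv := inv_reachable n p h
  obtain ⟨i', rfl⟩ : ∃ i', i = i' + 1 := ⟨i - 1, by omega⟩
  have hlen : i' < p.length := by
    obtain ⟨hlt, -⟩ := List.getElem?_eq_some_iff.mp h1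
    omega
  obtain ⟨a, ha⟩ : ∃ a, p[i']? = some a := by
    cases hp : p[i']? with
    | none => exact absurd (List.getElem?_eq_none_iff.mp hp) (by omega)
    | some a => exact ⟨a, rfl⟩
  obtain ⟨d, hd⟩ : ∃ d, p[i' + 3]? = some d := by
    cases hp : p[i' + 3]? with
    | none => exact absurd hp (by simpa using hnext1)
    | some d => exact ⟨d, rfl⟩
  have hae : a ≠ Cell.e := by
    intro hc; subst hc
    exact hprev (by simpa using ha)
  have hde : d ≠ Cell.e := by
    intro hc; subst hc
    exact hnext2 (by simpa using hd)
  exact hinv i' ⟨a, c, d, ha, hae, h1, hc, by simpa using h2, by simpa using hd, hde⟩
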